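/- Let n ≥ 1 and let A be a real n×n matrix satisfying the cyclic non-increasing condition. If the graph 𝒢(A) has at least two closed strongly connected components, or exactly one closed strongly connected component which is null, then det A = 0. -/

import Mathlib

open Matrix BigOperators

/-- The cyclic non-increasing condition: each row of `A` weakly decreases
cyclically starting from the diagonal, i.e. `a_{i[j-1]} ≥ a_{ij}` for all
`j ≠ i` (indices in `Fin n`, arithmetic mod `n`). -/
def CyclicNonIncr {n : ℕ} [NeZero n] (A : Matrix (Fin n) (Fin n) ℝ) : Prop :=
  ∀ i j : Fin n, j ≠ i → A i (j - 1) ≥ A i j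

/-- The directed graph `𝒢(A)` has an edge from `i` to `j` iff `a_{i[j-1]} > a_{ij}`. -/
def GraphEdge {n : ℕ} [NeZero n] (A : Matrix (Fin n) (Fin n) ℝ) (i j : Fin n) : Prop :=
  A i (j - 1) > A i j

/-- `i` and `j` are strongly connected in `𝒢(A)`: there are directed paths
(possibly of length 0) from `i` to `j` and from `j` to `i`. -/
def Conn {n : ℕ} [NeZero n] (A : Matrix (Fin n) (Fin n) ℝ) (i j : Fin n) : Prop :=
  Relation.ReflTransGen (GraphEdge A) i j ∧ Relation.ReflTransGen (GraphEdge A) j i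

/-- `C` is a strongly connected component of `𝒢(A)`: an equivalence class of
the strong-connectivity relation. -/
def IsSCC {n : ℕ} [NeZero n] (A : Matrix (Fin n) (Fin n) ℝ) (C : Set (Fin n)) : Prop :=
  ∃ i, C = {j | Conn A i j}

/-- `C` is a closed SCC of `𝒢(A)`: an SCC with no edge leaving it. -/
def IsClosedSCC {n : ℕ} [NeZero n] (A : Matrix (Fin n) (Fin n) ℝ) (C : Set (Fin n)) : Prop :=
  IsSCC A C ∧ ∀ i ∈ C, ∀ j, GraphEdge A i j → j ∈ C

/-- `C` is an open SCC of `𝒢(A)`: an SCC with some edge leaving it. -/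
def IsOpenSCC {n : ℕ} [NeZero n] (A : Matrix (Fin n) (Fin n) ℝ) (C : Set (Fin n)) : Prop :=
  IsSCC A C ∧ ¬ (∀ i ∈ C, ∀ j, GraphEdge A i j → j ∈ C)

/-- `x` is a fundamental solution for `C`: it is supported on `C` and solves
`[A]ᵀ_{CC} [x]_C = e_C`. -/
def IsFundSol {n : ℕ} [NeZero n] (A : Matrix (Fin n) (Fin n) ℝ) (C : Finset (Fin n))
    (x : Fin n → ℝ) : Prop :=
  (∀ i, i ∉ C → x i = 0) ∧ ∀ j ∈ C, ∑ i ∈ C, A i j * x i = 1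

/-- `y` is a null vector for `C`: it is supported on `C` and
`[A]ᵀ_{CC} [y]_C = 0`. -/
def IsNullVec {n : ℕ} [NeZero n] (A : Matrix (Fin n) (Fin n) ℝ) (C : Finset (Fin n))
    (y : Fin n → ℝ) : Prop :=
  (∀ i, i ∉ C → y i = 0) ∧ ∀ j ∈ C, ∑ i ∈ C, A i j * y i = 0


section Aux
variable {n : ℕ} [NeZero n] (A : Matrix (Fin n) (Fin n) ℝ)

open Fin.NatCast in
lemma key_left_null (hA : CyclicNonIncr A) (C : Set (Fin n)) (hC : IsClosedSCC A C) :
    ∃ x : Fin n → ℝ, x ≠ 0 ∧ (∀ i, i ∉ C → x i = 0) ∧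
      ∃ c : ℝ, ∀ j, ∑ i, x i * A i j = c := by
  classical
  obtain ⟨⟨i0, hC0⟩, hclosed⟩ := hC
  have hi0 : i0 ∈ C := by
    rw [hC0]; exact ⟨Relation.ReflTransGen.refl, Relation.ReflTransGen.refl⟩
  set L : Matrix (Fin n) (Fin n) ℝ := fun i j => A i j - A i (j - 1) with hLdef
  have fact1 : ∀ i ∈ C, ∀ j, j ∉ C → L i j = 0 := by
    intro i hi j hj
    have hne : j ≠ i := fun h => hj (h ▸ hi)
    have h1 : A i (j - 1) ≥ A i j := hA i j hne
    rcases eq_or_lt_of_le h1 with h2 | h2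
    · simp [hLdef, h2.symm]  -- careful direction
    · exact absurd (hclosed i hi j h2) hj
  have fact2 : ∀ i, ∑ j, L i j = 0 := by
    intro i
    simp only [hLdef, Finset.sum_sub_distrib, sub_eq_zero]
    exact Fintype.sum_equiv (Equiv.addRight (1 : Fin n)) _ _ (fun j => by simp)
  set C' : Finset (Fin n) := (Set.toFinite C).toFinset with hC'def
  have memC' : ∀ i, i ∈ C' ↔ i ∈ C := fun i => Set.Finite.mem_toFinset _
  have hC'ne : C'.Nonempty := ⟨i0, (memC' i0).2 hi0⟩
  set M : Matrix C' C' ℝ := fun i j => L i j with hMdef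
  have hMdet : M.det = 0 := by
    rw [← Matrix.exists_mulVec_eq_zero_iff]
    refine ⟨fun _ => 1, ?_, ?_⟩
    · intro h
      obtain ⟨i, hi⟩ := hC'ne
      exact one_ne_zero (congrFun h ⟨i, hi⟩)
    · funext j
      show ∑ i : C', M j i * 1 = 0
      simp only [mul_one, hMdef]
      have : ∑ i : C', L (j : Fin n) (i : Fin n) = ∑ i ∈ C', L (j : Fin n) i :=
        Finset.sum_coe_sort C' (fun i => L (j : Fin n) i)
      rw [this, Finset.sum_subset (Finset.subset_univ C')
        (fun x _ hx => fact1 j ((memC' _).1 j.2) x (fun h => hx ((memC' x).2 h)))]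
      exact fact2 j
  have hMTdet : Mᵀ.det = 0 := by rw [Matrix.det_transpose]; exact hMdet
  obtain ⟨w, hw0, hw⟩ := (Matrix.exists_mulVec_eq_zero_iff).2 hMTdet
  set x : Fin n → ℝ := fun i => if h : i ∈ C' then w ⟨i, h⟩ else 0 with hxdef
  have hsupp : ∀ i, i ∉ C → x i = 0 := by
    intro i hi
    simp only [hxdef]
    rw [dif_neg (fun h => hi ((memC' i).1 h))]
  have hx0 : x ≠ 0 := by
    intro h
    apply hw0
    funext i
    have := congrFun h (i : Fin n)
    simpa [hxdef, i.2] using this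
  have hxL : ∀ j, ∑ i, x i * L i j = 0 := by
    intro j
    have hred : ∑ i, x i * L i j = ∑ i ∈ C', x i * L i j := by
      refine (Finset.sum_subset (Finset.subset_univ C') ?_).symm
      intro i _ hi
      rw [hxdef]; simp [dif_neg hi]
    rw [hred, ← Finset.sum_coe_sort C' (fun i => x i * L i j)]
    by_cases hj : j ∈ C'
    · have := congrFun hw ⟨j, hj⟩
      simp only [Matrix.mulVec, dotProduct, Matrix.transpose_apply, hMdef,
        Pi.zero_apply] at this
      rw [← this]
      refine Finset.sum_congr rfl ?_
      intro i _
      simp only [hxdef, dif_pos i.2]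
      exact mul_comm _ _
    · refine Finset.sum_eq_zero ?_
      intro i _
      rw [fact1 i ((memC' _).1 i.2) j (fun h => hj ((memC' j).2 h)), mul_zero]
  set v : Fin n → ℝ := fun j => ∑ i, x i * A i j with hvdef
  have hv : ∀ j, v j = v (j - 1) := by
    intro j
    have := hxL j
    simp only [hLdef, mul_sub, Finset.sum_sub_distrib, sub_eq_zero] at this
    exact this
  have hconst : ∀ k : ℕ, v ((k : Fin n)) = v 0 := by
    intro k
    induction k with
    | zero => norm_num
    | succ k ih =>
      have h1 : ((k + 1 : ℕ) : Fin n) = (k : Fin n) + 1 := by push_cast; ring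
      rw [h1, hv ((k : Fin n) + 1), add_sub_cancel_right]
      exact ih
  refine ⟨x, hx0, hsupp, v 0, fun j => ?_⟩
  have : v j = v 0 := by
    rw [show j = ((j : ℕ) : Fin n) from (Fin.cast_val_eq_self j).symm]
    exact hconst j
  exact this

lemma conn_disjoint (C₁ C₂ : Set (Fin n)) (h1 : IsSCC A C₁) (h2 : IsSCC A C₂)
    (hne : C₁ ≠ C₂) : ∀ z, z ∈ C₁ → z ∉ C₂ := by
  obtain ⟨i1, rfl⟩ := h1
  obtain ⟨i2, rfl⟩ := h2
  intro z hz1 hz2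
  apply hne
  ext j
  constructor
  · intro hj
    exact ⟨(hz2.1.trans hz1.2).trans hj.1, hj.2.trans (hz1.1.trans hz2.2)⟩
  · intro hj
    exact ⟨(hz1.1.trans hz2.2).trans hj.1, hj.2.trans (hz2.1.trans hz1.2)⟩

end Aux

theorem stmt_8 (n : ℕ) [NeZero n] (hn : 1 ≤ n) (A : Matrix (Fin n) (Fin n) ℝ)
    (hA : CyclicNonIncr A)
    (h : (∃ C₁ C₂ : Set (Fin n), IsClosedSCC A C₁ ∧ IsClosedSCC A C₂ ∧ C₁ ≠ C₂) ∨
      (∃ C : Finset (Fin n), IsClosedSCC A (↑C : Set (Fin n)) ∧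
        (∀ C' : Set (Fin n), IsClosedSCC A C' → C' = ↑C) ∧
        ¬ ∃ y, IsFundSol A C y)) :
    A.det = 0 := by
  classical
  rw [← Matrix.exists_vecMul_eq_zero_iff]
  rcases h with ⟨C₁, C₂, hC1, hC2, hne⟩ | ⟨C, hC, _huniq, hnofund⟩
  · obtain ⟨x₁, hx1ne, hx1supp, c₁, hx1⟩ := key_left_null A hA C₁ hC1
    obtain ⟨x₂, hx2ne, hx2supp, c₂, hx2⟩ := key_left_null A hA C₂ hC2
    have hdisj := conn_disjoint A C₁ C₂ hC1.1 hC2.1 hne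
    have hvm : ∀ (x : Fin n → ℝ) (j), (x ᵥ* A) j = ∑ i, x i * A i j := by
      intro x j; rfl
    by_cases hc1 : c₁ = 0
    · refine ⟨x₁, hx1ne, ?_⟩
      funext j; rw [hvm, hx1 j, hc1]; rfl
    · by_cases hc2 : c₂ = 0
      · refine ⟨x₂, hx2ne, ?_⟩
        funext j; rw [hvm, hx2 j, hc2]; rfl
      · obtain ⟨i, hi⟩ : ∃ i, x₁ i ≠ 0 := Function.ne_iff.1 hx1ne
        have hiC1 : i ∈ C₁ := by
          by_contra hmem; exact hi (hx1supp i hmem)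
        have hx2i : x₂ i = 0 := hx2supp i (hdisj i hiC1)
        refine ⟨c₂ • x₁ - c₁ • x₂, ?_, ?_⟩
        · intro h0
          have := congrFun h0 i
          simp only [Pi.sub_apply, Pi.smul_apply, smul_eq_mul, hx2i, mul_zero,
            sub_zero, Pi.zero_apply] at this
          exact (mul_ne_zero hc2 hi) this
        · funext j
          rw [hvm]
          simp only [Pi.sub_apply, Pi.smul_apply, smul_eq_mul, sub_mul,
            Finset.sum_sub_distrib, mul_assoc, ← Finset.mul_sum, hx1 j, hx2 j]
          simp [mul_comm]
  · obtain ⟨x, hxne, hxsupp, c, hx⟩ := key_left_null A hA (↑C) hC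
    by_cases hc : c = 0
    · refine ⟨x, hxne, ?_⟩
      funext j
      show ∑ i, x i * A i j = 0
      rw [hx j, hc]
    · exfalso
      apply hnofund
      refine ⟨fun i => c⁻¹ * x i, fun i hi => ?_, fun j _ => ?_⟩
      · show c⁻¹ * x i = 0
        rw [hxsupp i (by simpa using hi), mul_zero]
      · have : ∑ i ∈ C, A i j * (c⁻¹ * x i) = c⁻¹ * ∑ i ∈ C, x i * A i j := by
          rw [Finset.mul_sum]; refine Finset.sum_congr rfl fun i _ => by ring
        rw [this]
        have hfull : ∑ i ∈ C, x i * A i j = ∑ i, x i * A i j := by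
          refine Finset.sum_subset (Finset.subset_univ C) ?_
          intro i _ hi
          rw [hxsupp i (by simpa using hi), zero_mul]
        rw [hfull, hx j, inv_mul_cancel₀ hc]
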